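/- arXiv:math/0403443 — 5 statements merged into one kernel-verified Lean document; each statement's English description precedes it below -/
import Mathlib

section
/- Let A be a unital subalgebra of continuous functions on a compact space 𝒳 (the closed unit ball of a complex Banach space E), containing the restrictions of bounded linear functionals of norm ≤ 1, and let x ∈ 𝒳 be nonzero with d = ‖x‖_E. If f is a function on 𝒳 of the form f(y) = p(ℓ₁(y), …, ℓ_m(y)) for a polynomial p and norm-one functionals ℓᵢ, with sup_{𝒳} |f| ≤ 1, then |f(x) − f(0)| ≤ 2d. -/
open Metric Set

lemma stmt_4_aux {m : ℕ} (c : Fin m → ℂ) (p : MvPolynomial (Fin m) ℂ) :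
    Differentiable ℂ (fun z : ℂ => MvPolynomial.eval (fun i => z * c i) p) := by
  induction p using MvPolynomial.induction_on with
  | C a => simpa using differentiable_const a
  | add p q hp hq => simp only [map_add]; exact hp.add hq
  | mul_X p i hp =>
      simp only [map_mul, MvPolynomial.eval_X]; exact hp.mul (differentiable_id.mul (differentiable_const (c i)))

/-- Schwarz-lemma estimate for the Gleason distance: if `f` is a polynomial in finitely many
norm-one continuous linear functionals on a complex Banach space `E`, bounded by `1` on the
closed unit ball, and `x` is a nonzero point of the closed unit ball, then
`|f(x) - f(0)| ≤ 2‖x‖`. -/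
theorem stmt_4 {E : Type*} [NormedAddCommGroup E] [NormedSpace ℂ E]
    (m : ℕ) (p : MvPolynomial (Fin m) ℂ) (l : Fin m → (E →L[ℂ] ℂ))
    (hl : ∀ i, ‖l i‖ = 1)
    (f : E → ℂ) (hf : ∀ y, f y = MvPolynomial.eval (fun i => l i y) p)
    (hbound : ∀ y : E, ‖y‖ ≤ 1 → ‖f y‖ ≤ 1)
    (x : E) (hx : x ≠ 0) (hxball : ‖x‖ ≤ 1) :
    ‖f x - f 0‖ ≤ 2 * ‖x‖ := by
  have hd0 : 0 < ‖x‖ := norm_pos_iff.mpr hx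
  have htriv : ‖f x - f 0‖ ≤ 2 := by
    calc ‖f x - f 0‖ ≤ ‖f x‖ + ‖f 0‖ := norm_sub_le _ _
    _ ≤ 1 + 1 := add_le_add (hbound x hxball) (hbound 0 (by simp))
    _ = 2 := by norm_num
  rcases eq_or_lt_of_le hxball with h1 | hlt
  · rw [h1]; linarith
  -- the unit vector
  obtain ⟨u, hux, hunorm⟩ : ∃ u : E, (‖x‖ : ℝ) • u = x ∧ ‖u‖ = 1 := by
    refine ⟨‖x‖⁻¹ • x, smul_inv_smul₀ hd0.ne' x, ?_⟩
    rw [norm_smul, norm_inv, Real.norm_of_nonneg hd0.le, inv_mul_cancel₀ hd0.ne']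
  have hgf : ∀ z : ℂ,
      MvPolynomial.eval (fun i => z * l i u) p = f (z • u) := by
    intro z
    rw [hf]
    have : (fun i => z * l i u) = fun i => l i (z • u) := by
      funext i; rw [map_smul, smul_eq_mul]
    rw [this]
  have hdiff := stmt_4_aux (fun i => l i u) p
  have h00 : MvPolynomial.eval (fun i => (0:ℂ) * l i u) p = f 0 := by
    rw [hgf]; simp
  have key : ∀ ε : ℝ, 0 < ε → ‖f x - f 0‖ ≤ (2 + ε) * ‖x‖ := by
    intro ε hε
    have hmaps : MapsTo (fun z : ℂ => MvPolynomial.eval (fun i => z * l i u) p)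
        (ball (0 : ℂ) 1)
        (ball ((fun z : ℂ => MvPolynomial.eval (fun i => z * l i u) p) 0) (2 + ε)) := by
      intro z hz
      have hzu : ‖z • u‖ ≤ 1 := by
        rw [norm_smul, hunorm, mul_one]
        exact (mem_ball_zero_iff.mp hz).le
      simp only [mem_ball, dist_eq_norm]
      rw [hgf, h00]
      calc ‖f (z • u) - f 0‖ ≤ ‖f (z • u)‖ + ‖f 0‖ := norm_sub_le _ _
        _ ≤ 1 + 1 := add_le_add (hbound _ hzu) (hbound 0 (by simp))
        _ < 2 + ε := by linarith
    have hdball : ((‖x‖ : ℝ) : ℂ) ∈ ball (0 : ℂ) 1 := by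
      rw [mem_ball_zero_iff, Complex.norm_real, Real.norm_of_nonneg hd0.le]
      exact hlt
    have := Complex.dist_le_div_mul_dist_of_mapsTo_ball hdiff.differentiableOn
      (hmaps.mono_right ball_subset_closedBall) hdball
    simp only [dist_eq_norm, sub_zero, div_one] at this
    rw [hgf, hgf, zero_smul, Complex.norm_real, Real.norm_of_nonneg hd0.le] at this
    have hxu : ((‖x‖ : ℝ) : ℂ) • u = x := by
      rw [Complex.coe_smul, hux]
    rwa [hxu] at this
  refine le_of_forall_pos_le_add fun ε hε => ?_
  have := key ε hε
  nlinarith [hd0, hlt, hε]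
end

section
/- Let φ : [0,1] → [0,1] be continuously differentiable with a unique fixed point x₀, and suppose the iterates converge: ⋂_n φ_n([0,1]) = {x₀} and φ'(x₀) = 0. Then for every ε > 0 there exists N such that for all n > N and all t ∈ [0,1], |φ_n'(t)| ≤ ‖φ'‖_∞^N · ε^{n−N}; in particular ‖φ_n'‖_∞^{1/n} → 0 as n → ∞. -/
open Set Filter

/-- If `φ : [0,1] → [0,1]` is `C¹` with a unique fixed point `x₀`, the iterates converge
(`⋂_n φ_n([0,1]) = {x₀}`), and `φ'(x₀) = 0`, then for every `ε > 0` there is `N` such that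
`|φ_n'(t)| ≤ ‖φ'‖_∞^N · ε^(n-N)` for all `n > N`, `t ∈ [0,1]`; in particular
`‖φ_n'‖_∞^(1/n) → 0`. Derivatives are taken within `[0,1]`. -/
theorem stmt_7 (φ : ℝ → ℝ)
    (hmaps : MapsTo φ (Icc (0:ℝ) 1) (Icc (0:ℝ) 1))
    (hφ : ContDiffOn ℝ 1 φ (Icc (0:ℝ) 1))
    (x₀ : ℝ) (hx₀ : x₀ ∈ Icc (0:ℝ) 1) (hfix : φ x₀ = x₀)
    (huniq : ∀ y ∈ Icc (0:ℝ) 1, φ y = y → y = x₀)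
    (hinter : (⋂ n : ℕ, φ^[n] '' Icc (0:ℝ) 1) = {x₀})
    (hder : derivWithin φ (Icc (0:ℝ) 1) x₀ = 0) :
    (∀ ε : ℝ, 0 < ε → ∃ N : ℕ, ∀ n > N, ∀ t ∈ Icc (0:ℝ) 1,
      |derivWithin (φ^[n]) (Icc (0:ℝ) 1) t| ≤
        (⨆ s : Icc (0:ℝ) 1, |derivWithin φ (Icc (0:ℝ) 1) (s : ℝ)|) ^ N * ε ^ (n - N)) ∧
    Tendsto (fun n : ℕ =>
        (⨆ t : Icc (0:ℝ) 1, |derivWithin (φ^[n]) (Icc (0:ℝ) 1) (t : ℝ)|) ^ ((1 : ℝ) / n))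
      atTop (nhds 0) := by
  have hUD : UniqueDiffOn ℝ (Icc (0:ℝ) 1) := uniqueDiffOn_Icc one_pos
  set d : ℝ → ℝ := derivWithin φ (Icc (0:ℝ) 1) with hd_def
  have hd_cont : ContinuousOn d (Icc (0:ℝ) 1) :=
    hφ.continuousOn_derivWithin hUD le_rfl
  have hmapsn : ∀ n, MapsTo (φ^[n]) (Icc (0:ℝ) 1) (Icc (0:ℝ) 1) := hmaps.iterate
  have hcont : ContinuousOn φ (Icc (0:ℝ) 1) := hφ.continuousOn
  have hcontn : ∀ n, ContinuousOn (φ^[n]) (Icc (0:ℝ) 1) := by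
    intro n
    induction n with
    | zero => simpa using continuousOn_id
    | succ n ih =>
      rw [Function.iterate_succ]
      exact ih.comp hcont hmaps
  have hasDeriv : ∀ n, ∀ t ∈ Icc (0:ℝ) 1,
      HasDerivWithinAt (φ^[n]) (∏ k ∈ Finset.range n, d (φ^[k] t)) (Icc (0:ℝ) 1) t := by
    intro n
    induction n with
    | zero => intro t ht; simpa using hasDerivWithinAt_id t (Icc (0:ℝ) 1)
    | succ n ih =>
      intro t ht
      have h1 : HasDerivWithinAt φ (d (φ^[n] t)) (Icc (0:ℝ) 1) (φ^[n] t) :=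
        ((hφ.differentiableOn one_ne_zero) _ (hmapsn n ht)).hasDerivWithinAt
      have h2 := h1.comp t (ih t ht) (hmapsn n)
      rw [Function.iterate_succ', Finset.prod_range_succ, mul_comm]
      exact h2
  have hderiv_eq : ∀ n, ∀ t ∈ Icc (0:ℝ) 1,
      derivWithin (φ^[n]) (Icc (0:ℝ) 1) t = ∏ k ∈ Finset.range n, d (φ^[k] t) := by
    intro n t ht
    exact (hasDeriv n t ht).derivWithin (hUD t ht)
  set M : ℝ := ⨆ s : Icc (0:ℝ) 1, |d (s : ℝ)| with hM_def
  have hbdd : BddAbove (Set.range fun s : Icc (0:ℝ) 1 => |d (s : ℝ)|) := by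
    have := isCompact_Icc.bddAbove_image hd_cont.abs
    rwa [Set.image_eq_range] at this
  have hM : ∀ s ∈ Icc (0:ℝ) 1, |d s| ≤ M := fun s hs => le_ciSup hbdd ⟨s, hs⟩
  have hM0 : 0 ≤ M := le_trans (abs_nonneg _) (hM x₀ hx₀)
  have part1 : ∀ ε : ℝ, 0 < ε → ∃ N : ℕ, ∀ n > N, ∀ t ∈ Icc (0:ℝ) 1,
      |derivWithin (φ^[n]) (Icc (0:ℝ) 1) t| ≤ M ^ N * ε ^ (n - N) := by
    intro ε hε
    have hcw : Tendsto d (nhdsWithin x₀ (Icc (0:ℝ) 1)) (nhds 0) := by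
      have := hd_cont x₀ hx₀
      rwa [ContinuousWithinAt, hder] at this
    have hev : ∀ᶠ x in nhdsWithin x₀ (Icc (0:ℝ) 1), |d x| < ε := by
      have hm := hcw (Metric.ball_mem_nhds 0 hε)
      filter_upwards [hm] with x hx
      simpa [Real.dist_eq] using hx
    obtain ⟨U, hUopen, hx₀U, hUsub⟩ := mem_nhdsWithin.mp hev
    set K : ℕ → Set ℝ := fun n => φ^[n] '' Icc (0:ℝ) 1 with hK_def
    have hKc : ∀ n, IsCompact (K n) := fun n =>
      isCompact_Icc.image_of_continuousOn (hcontn n)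
    have hanti : Antitone K := by
      apply antitone_nat_of_succ_le
      intro n
      rw [hK_def]
      simp only [Function.iterate_succ, Set.image_comp]
      exact Set.image_mono (hmaps.image_subset)
    have hdir : Directed (· ⊇ ·) K := hanti.directed_ge
    have hU' : ∀ x ∈ ⋂ n, K n, U ∈ nhds x := by
      rw [hK_def]
      simp only [hinter]
      intro x hx
      rw [← hK_def, hinter, Set.mem_singleton_iff] at hx
      subst hx
      exact hUopen.mem_nhds hx₀U
    obtain ⟨N, hN⟩ := exists_subset_nhds_of_isCompact hdir hKc hU'
    refine ⟨N, fun n hn t ht => ?_⟩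
    rw [hderiv_eq n t ht, Finset.abs_prod]
    have hεle : ∀ k, |d (φ^[N + k] t)| ≤ ε := by
      intro k
      have hmem : φ^[N + k] t ∈ K (N + k) := ⟨t, ht, rfl⟩
      have hmemN : φ^[N + k] t ∈ U := hN (hanti (Nat.le_add_right N k) hmem)
      exact (hUsub ⟨hmemN, hmapsn (N + k) ht⟩).le
    calc ∏ k ∈ Finset.range n, |d (φ^[k] t)|
        = (∏ k ∈ Finset.range N, |d (φ^[k] t)|) *
          ∏ k ∈ Finset.range (n - N), |d (φ^[N + k] t)| := by
          rw [← Finset.prod_range_add, Nat.add_sub_cancel' hn.le]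
      _ ≤ M ^ N * ε ^ (n - N) := by
          apply mul_le_mul
          · calc (∏ k ∈ Finset.range N, |d (φ^[k] t)|)
                ≤ ∏ _k ∈ Finset.range N, M :=
                  Finset.prod_le_prod (fun i _ => abs_nonneg _)
                    (fun i _ => hM _ (hmapsn i ht))
              _ = M ^ N := by rw [Finset.prod_const, Finset.card_range]
          · calc (∏ k ∈ Finset.range (n - N), |d (φ^[N + k] t)|)
                ≤ ∏ _k ∈ Finset.range (n - N), ε :=
                  Finset.prod_le_prod (fun i _ => abs_nonneg _) (fun i _ => hεle i)
              _ = ε ^ (n - N) := by rw [Finset.prod_const, Finset.card_range]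
          · exact Finset.prod_nonneg fun i _ => abs_nonneg _
          · exact pow_nonneg hM0 N
  refine ⟨part1, ?_⟩
  set f : ℕ → ℝ := fun n => ⨆ t : Icc (0:ℝ) 1, |derivWithin (φ^[n]) (Icc (0:ℝ) 1) (t : ℝ)|
    with hf_def
  have hf0 : ∀ n, 0 ≤ f n := fun n => Real.iSup_nonneg fun t => abs_nonneg _
  rw [tendsto_order]
  constructor
  · intro a ha
    filter_upwards with n
    exact lt_of_lt_of_le ha (Real.rpow_nonneg (hf0 n) _)
  · intro b hb
    set ε : ℝ := min (b / 2) 2⁻¹ with hε_def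
    have hε : 0 < ε := lt_min (half_pos hb) (by norm_num)
    have hεb : ε < b := (min_le_left _ _).trans_lt (half_lt_self hb)
    obtain ⟨N, hN⟩ := part1 ε hε
    set C : ℝ := max (M ^ N) 1 with hC_def
    have hC0 : (0:ℝ) < C := lt_of_lt_of_le one_pos (le_max_right _ _)
    have he : Tendsto (fun n : ℕ => ((n - N : ℕ) : ℝ) / n) atTop (nhds 1) := by
      have h1 : Tendsto (fun n : ℕ => 1 - (N : ℝ) / n) atTop (nhds (1 - 0)) :=
        tendsto_const_nhds.sub (tendsto_const_div_atTop_nhds_zero_nat (N : ℝ))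
      rw [sub_zero] at h1
      apply h1.congr'
      filter_upwards [eventually_ge_atTop (N + 1)] with n hn
      have hnN : N ≤ n := le_of_lt hn
      have hn0 : (n : ℝ) ≠ 0 := Nat.cast_ne_zero.mpr (by omega)
      rw [Nat.cast_sub hnN, sub_div, div_self hn0]
    have hg : Tendsto (fun n : ℕ => C ^ ((1:ℝ) / n) * ε ^ (((n - N : ℕ) : ℝ) / n))
        atTop (nhds ε) := by
      have h1 : Tendsto (fun n : ℕ => C ^ ((1:ℝ) / n)) atTop (nhds (C ^ (0:ℝ))) :=
        tendsto_const_nhds.rpow tendsto_one_div_atTop_nhds_zero_nat (Or.inl hC0.ne')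
      have h2 : Tendsto (fun n : ℕ => ε ^ (((n - N : ℕ) : ℝ) / n)) atTop
          (nhds (ε ^ (1:ℝ))) := tendsto_const_nhds.rpow he (Or.inl hε.ne')
      have := h1.mul h2
      simpa [Real.rpow_zero, Real.rpow_one] using this
    have hlt : ∀ᶠ n : ℕ in atTop,
        C ^ ((1:ℝ) / n) * ε ^ (((n - N : ℕ) : ℝ) / n) < b :=
      hg.eventually_lt_const hεb
    filter_upwards [hlt, eventually_gt_atTop N] with n hgn hn
    have hfn : f n ≤ C * ε ^ (n - N) := by
      apply Real.iSup_le
      · intro t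
        exact le_trans (hN n hn t t.2)
          (mul_le_mul_of_nonneg_right (le_max_left _ _) (pow_nonneg hε.le _))
      · positivity
    calc f n ^ ((1:ℝ) / n)
        ≤ (C * ε ^ (n - N)) ^ ((1:ℝ) / n) :=
          Real.rpow_le_rpow (hf0 n) hfn (by positivity)
      _ = C ^ ((1:ℝ) / n) * ε ^ (((n - N : ℕ) : ℝ) / n) := by
          rw [Real.mul_rpow hC0.le (pow_nonneg hε.le _), ← Real.rpow_natCast ε (n - N),
            ← Real.rpow_mul hε.le, mul_one_div]
      _ < b := hgn
end

section
/- Let φ(x) = x²/2 on [0,1]. Then φ maps [0,1] into itself, ⋂_{n=0}^∞ φ_n([0,1]) = {0}, φ'(0) = 0, and moreover the composition operator T on C¹[0,1] given by Tf = f∘φ satisfies lim_n ‖T^n − L‖^{1/n} = 0 where Lf = f(0)·1, while T^n is not of the form f ↦ f(c)·1 for any n and c. -/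
open Set Filter


noncomputable def psi8 : ℝ → ℝ := fun x => x ^ 2 / 2

def E8 (n : ℕ) : ℕ := n * (n - 1) / 2

lemma E8_rec (n : ℕ) : E8 (n + 1) = E8 n + n := by
  have h : (n + 1) * n = n * (n - 1) + 2 * n := by
    cases n with
    | zero => simp
    | succ m => simp [Nat.succ_sub_one]; ring
  unfold E8
  simp only [Nat.add_sub_cancel, h, Nat.add_mul_div_left _ _ (by norm_num : 0 < 2)]

lemma E8_ge (n : ℕ) : n ≤ E8 n + 1 := by
  cases n with
  | zero => simp
  | succ m => rw [E8_rec]; omega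

lemma E8_succ_le (n : ℕ) : E8 (n + 1) ≤ 2 * E8 n + 1 := by
  rw [E8_rec]; have := E8_ge n; omega

lemma E8_lower (k n : ℕ) (h : 2 * k + 6 ≤ n) : k * n + 1 ≤ E8 (n - 1) := by
  obtain ⟨m, rfl⟩ := Nat.exists_eq_add_of_le h
  have h1 : (2 * k + 6 + m) - 1 = 2 * k + 5 + m := by omega
  have h2 : (2 * k + 5 + m) - 1 = 2 * k + 4 + m := by omega
  unfold E8
  rw [h1, h2, Nat.le_div_iff_mul_le (by norm_num : 0 < 2)]
  nlinarith

lemma psi8_mem : MapsTo psi8 (Icc (0:ℝ) 1) (Icc (0:ℝ) 1) := by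
  intro x hx
  obtain ⟨h0, h1⟩ := hx
  constructor
  · unfold psi8; positivity
  · show x ^ 2 / 2 ≤ 1; nlinarith

lemma psi8_iter_bound (n : ℕ) : ∀ x ∈ Icc (0:ℝ) 1,
    psi8^[n] x ∈ Icc (0:ℝ) 1 ∧ psi8^[n] x ≤ (1/2 : ℝ) ^ (E8 n) := by
  induction n with
  | zero =>
    intro x hx
    refine ⟨by simpa using hx, ?_⟩
    simpa [E8] using hx.2
  | succ n ih =>
    intro x hx
    obtain ⟨hmem, hle⟩ := ih x hx
    have hstep : psi8^[n+1] x = (psi8^[n] x) ^ 2 / 2 := by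
      rw [Function.iterate_succ_apply']; rfl
    constructor
    · rw [Function.iterate_succ_apply']
      exact psi8_mem hmem
    · rw [hstep]
      have h1 : (psi8^[n] x) ^ 2 / 2 ≤ ((1/2 : ℝ) ^ (E8 n)) ^ 2 / 2 := by
        have := hmem.1
        nlinarith
      have h2 : ((1/2 : ℝ) ^ (E8 n)) ^ 2 / 2 = (1/2 : ℝ) ^ (E8 n * 2 + 1) := by
        rw [pow_add, pow_mul, pow_one]; ring
      have h3 : (1/2 : ℝ) ^ (E8 n * 2 + 1) ≤ (1/2 : ℝ) ^ (E8 (n+1)) :=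
        pow_le_pow_of_le_one (by norm_num) (by norm_num) (by have := E8_succ_le n; omega)
      linarith

lemma psi8_iter_zero (n : ℕ) : psi8^[n] 0 = 0 :=
  Function.iterate_fixed (by simp [psi8]) n

lemma psi8_iter_pos (n : ℕ) : ∀ x, 0 < x → 0 < psi8^[n] x := by
  induction n with
  | zero => intro x hx; simpa using hx
  | succ n ih =>
    intro x hx
    rw [Function.iterate_succ_apply]
    exact ih _ (by unfold psi8; positivity)

lemma psi8_hasDerivAt (y : ℝ) : HasDerivAt psi8 y y := by
  have := (hasDerivAt_pow 2 y).div_const 2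
  unfold psi8
  exact this.congr_deriv (by norm_num)

lemma psi8_iter_deriv (n : ℕ) : ∀ x ∈ Icc (0:ℝ) 1,
    ∃ d, HasDerivAt (psi8^[n]) d x ∧ 0 ≤ d ∧ d ≤ (1/2 : ℝ) ^ (E8 (n - 1)) := by
  induction n with
  | zero =>
    intro x hx
    exact ⟨1, by simpa using hasDerivAt_id x, zero_le_one, by simp [E8]⟩
  | succ n ih =>
    intro x hx
    obtain ⟨d, hd, hd0, hdle⟩ := ih x hx
    obtain ⟨hymem, hyle⟩ := psi8_iter_bound n x hx
    have hcomp : HasDerivAt (psi8^[n+1]) (psi8^[n] x * d) x := by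
      rw [Function.iterate_succ']
      exact (psi8_hasDerivAt (psi8^[n] x)).comp x hd
    refine ⟨psi8^[n] x * d, hcomp, mul_nonneg hymem.1 hd0, ?_⟩
    have hd1 : d ≤ 1 := hdle.trans (pow_le_one₀ (by norm_num : (0:ℝ) ≤ 1/2) (by norm_num))
    have : psi8^[n] x * d ≤ (1/2 : ℝ) ^ (E8 n) * 1 :=
      mul_le_mul hyle hd1 hd0 (by positivity)
    simpa using this

/-- Let `φ(x) = x²/2` on `[0,1]`. Then `φ` maps `[0,1]` into itself,
`⋂_n φ_n([0,1]) = {0}`, `φ'(0) = 0`, the composition operator `T f = f∘φ` on `C¹[0,1]`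
(modeled by a Banach space `B` with realization `ι` as `C¹` functions carrying the norm
`‖f‖_∞ + ‖f'‖_∞`) satisfies `‖T^n - L‖^(1/n) → 0` where `Lf = f(0)·1`, while no power
`T^n` is of the form `f ↦ f(c)·1`. -/
theorem stmt_8
    {B : Type*} [NormedAddCommGroup B] [NormedSpace ℝ B] [CompleteSpace B]
    (ι : B →ₗ[ℝ] (ℝ → ℝ))
    (hnorm : ∀ f : B, ‖f‖ = (⨆ x : Icc (0:ℝ) 1, |ι f (x : ℝ)|) +
        (⨆ x : Icc (0:ℝ) 1, |derivWithin (ι f) (Icc (0:ℝ) 1) (x : ℝ)|))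
    (hC1 : ∀ f : B, ContDiffOn ℝ 1 (ι f) (Icc (0:ℝ) 1))
    (hsurj : ∀ g : ℝ → ℝ, ContDiffOn ℝ 1 g (Icc (0:ℝ) 1) →
      ∃ f : B, ∀ x ∈ Icc (0:ℝ) 1, ι f x = g x)
    (φ : ℝ → ℝ) (hφdef : ∀ x, φ x = x ^ 2 / 2)
    (T L : B →L[ℝ] B)
    (hT : ∀ f : B, ∀ x ∈ Icc (0:ℝ) 1, ι (T f) x = ι f (φ x))
    (hL : ∀ f : B, ∀ x ∈ Icc (0:ℝ) 1, ι (L f) x = ι f 0) :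
    MapsTo φ (Icc (0:ℝ) 1) (Icc (0:ℝ) 1) ∧
    (⋂ n : ℕ, φ^[n] '' Icc (0:ℝ) 1) = {0} ∧
    deriv φ 0 = 0 ∧
    Tendsto (fun n : ℕ => ‖T ^ n - L‖ ^ ((1 : ℝ) / n)) atTop (nhds 0) ∧
    (∀ n : ℕ, ∀ c ∈ Icc (0:ℝ) 1, ∃ f : B, ∃ x ∈ Icc (0:ℝ) 1, ι ((T ^ n) f) x ≠ ι f c) := by

  have hφ : φ = psi8 := funext fun x => by rw [hφdef]; rfl
  subst hφ
  haveI : Nonempty (Icc (0:ℝ) 1) := ⟨⟨0, le_rfl, zero_le_one⟩⟩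
  -- the iterated operator
  have hTn : ∀ n : ℕ, ∀ f : B, ∀ x ∈ Icc (0:ℝ) 1, ι ((T ^ n) f) x = ι f (psi8^[n] x) := by
    intro n
    induction n with
    | zero => intro f x hx; simp
    | succ n ih =>
      intro f x hx
      rw [pow_succ, ContinuousLinearMap.mul_apply, ih (T f) x hx,
        hT f _ ((psi8_iter_bound n x hx).1), Function.iterate_succ_apply']
  -- intersection of images
  have hInter : (⋂ n : ℕ, psi8^[n] '' Icc (0:ℝ) 1) = {0} := by
    apply Subset.antisymm
    · intro y hy
      simp only [mem_iInter] at hy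
      have h0 : y ∈ Icc (0:ℝ) 1 := by simpa using hy 0
      have hle : ∀ n, y ≤ (1/2:ℝ) ^ E8 n := by
        intro n
        obtain ⟨x, hx, rfl⟩ := hy n
        exact (psi8_iter_bound n x hx).2
      have hy0 : y ≤ 0 := by
        by_contra h
        push_neg at h
        obtain ⟨m, hm⟩ := exists_pow_lt_of_lt_one h (by norm_num : (1/2:ℝ) < 1)
        have hE : m ≤ E8 (m+1) := by rw [E8_rec]; omega
        have h2 : (1/2:ℝ) ^ E8 (m+1) ≤ (1/2:ℝ) ^ m :=
          pow_le_pow_of_le_one (by norm_num) (by norm_num) hE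
        linarith [hle (m+1)]
      simp [le_antisymm hy0 h0.1]
    · intro y hy
      simp only [mem_singleton_iff] at hy
      subst hy
      simp only [mem_iInter]
      intro n
      exact ⟨0, ⟨le_rfl, zero_le_one⟩, psi8_iter_zero n⟩
  -- operator norm bound
  have key : ∀ m : ℕ, ‖T ^ (m+1) - L‖ ≤ 2 * (1/2:ℝ) ^ E8 m := by
    intro m
    apply ContinuousLinearMap.opNorm_le_bound _ (by positivity)
    intro f
    have hfd : DifferentiableOn ℝ (ι f) (Icc (0:ℝ) 1) := (hC1 f).differentiableOn one_ne_zero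
    have hdc : ContinuousOn (derivWithin (ι f) (Icc (0:ℝ) 1)) (Icc (0:ℝ) 1) :=
      (hC1 f).continuousOn_derivWithin (uniqueDiffOn_Icc zero_lt_one) le_rfl
    obtain ⟨C, hC⟩ := isCompact_Icc.exists_bound_of_continuousOn hdc
    set M := ⨆ x : Icc (0:ℝ) 1, |derivWithin (ι f) (Icc (0:ℝ) 1) (x:ℝ)| with hMdef
    have hbdd : BddAbove (range fun x : Icc (0:ℝ) 1 =>
        |derivWithin (ι f) (Icc (0:ℝ) 1) (x:ℝ)|) :=
      ⟨C, by rintro _ ⟨x, rfl⟩; simpa using hC x x.2⟩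
    have hMle : ∀ y ∈ Icc (0:ℝ) 1, |derivWithin (ι f) (Icc (0:ℝ) 1) y| ≤ M :=
      fun y hy => le_ciSup hbdd ⟨y, hy⟩
    have hM0 : 0 ≤ M := (abs_nonneg _).trans (hMle 0 ⟨le_rfl, zero_le_one⟩)
    have hMf : M ≤ ‖f‖ := by
      rw [hnorm f]
      have h1 : (0:ℝ) ≤ ⨆ x : Icc (0:ℝ) 1, |ι f (x:ℝ)| :=
        Real.iSup_nonneg fun x => abs_nonneg _
      linarith
    have hEm : E8 m ≤ E8 (m+1) := by rw [E8_rec]; omega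
    have hval : ∀ x ∈ Icc (0:ℝ) 1,
        ι ((T ^ (m+1) - L) f) x = ι f (psi8^[m+1] x) - ι f 0 := by
      intro x hx
      rw [ContinuousLinearMap.sub_apply, map_sub, Pi.sub_apply, hTn (m+1) f x hx, hL f x hx]
    have hS1 : ∀ x ∈ Icc (0:ℝ) 1,
        |ι ((T ^ (m+1) - L) f) x| ≤ M * (1/2:ℝ) ^ E8 m := by
      intro x hx
      rw [hval x hx]
      have hmem := (psi8_iter_bound (m+1) x hx).1
      have h := (convex_Icc (0:ℝ) 1).norm_image_sub_le_of_norm_derivWithin_le hfd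
        (fun y hy => by simpa using hMle y hy) ⟨le_rfl, zero_le_one⟩ hmem
      rw [Real.norm_eq_abs, Real.norm_eq_abs, sub_zero, abs_of_nonneg hmem.1] at h
      refine h.trans ?_
      have h2 : psi8^[m+1] x ≤ (1/2:ℝ) ^ E8 m := (psi8_iter_bound (m+1) x hx).2.trans
        (pow_le_pow_of_le_one (by norm_num) (by norm_num) hEm)
      exact mul_le_mul_of_nonneg_left h2 hM0
    have hS2 : ∀ x ∈ Icc (0:ℝ) 1,
        |derivWithin (ι ((T ^ (m+1) - L) f)) (Icc (0:ℝ) 1) x| ≤ M * (1/2:ℝ) ^ E8 m := by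
      intro x hx
      obtain ⟨d, hd, hd0, hdle⟩ := psi8_iter_deriv (m+1) x hx
      have hmem := (psi8_iter_bound (m+1) x hx).1
      have hcomp : HasDerivWithinAt (fun y => ι f (psi8^[m+1] y) - ι f 0)
          (derivWithin (ι f) (Icc (0:ℝ) 1) (psi8^[m+1] x) * d) (Icc (0:ℝ) 1) x := by
        have h1 := (hfd _ hmem).hasDerivWithinAt
        have h2 := h1.comp x hd.hasDerivWithinAt
          (fun y hy => (psi8_iter_bound (m+1) y hy).1)
        simpa [Function.comp] using h2.sub_const (ι f 0)
      have heq : derivWithin (ι ((T ^ (m+1) - L) f)) (Icc (0:ℝ) 1) x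
          = derivWithin (fun y => ι f (psi8^[m+1] y) - ι f 0) (Icc (0:ℝ) 1) x :=
        derivWithin_congr (fun y hy => hval y hy) (hval x hx)
      rw [heq, hcomp.derivWithin ((uniqueDiffOn_Icc zero_lt_one) x hx)]
      rw [abs_mul, abs_of_nonneg hd0]
      have hE : d ≤ (1/2:ℝ) ^ E8 m := by simpa using hdle
      exact mul_le_mul (hMle _ hmem) hE hd0 hM0
    rw [hnorm ((T ^ (m+1) - L) f)]
    have b1 : (⨆ x : Icc (0:ℝ) 1, |ι ((T ^ (m+1) - L) f) (x:ℝ)|) ≤ M * (1/2:ℝ) ^ E8 m :=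
      ciSup_le fun x => hS1 x x.2
    have b2 : (⨆ x : Icc (0:ℝ) 1,
        |derivWithin (ι ((T ^ (m+1) - L) f)) (Icc (0:ℝ) 1) (x:ℝ)|) ≤ M * (1/2:ℝ) ^ E8 m :=
      ciSup_le fun x => hS2 x x.2
    have hp : (0:ℝ) ≤ (1/2:ℝ) ^ E8 m := by positivity
    nlinarith
  -- tendsto
  have htend : Tendsto (fun n : ℕ => ‖T ^ n - L‖ ^ ((1:ℝ)/n)) atTop (nhds 0) := by
    rw [Metric.tendsto_atTop]
    intro ε hε
    obtain ⟨k, hk⟩ := exists_pow_lt_of_lt_one hε (by norm_num : (1/2:ℝ) < 1)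
    refine ⟨2*k+6, fun n hn => ?_⟩
    have hn0 : (n:ℝ) ≠ 0 := Nat.cast_ne_zero.mpr (by omega)
    have h1 : ‖T ^ n - L‖ ≤ (1/2:ℝ) ^ (k*n) := by
      have harith : k * n + 1 ≤ E8 (n-1) := E8_lower k n hn
      obtain ⟨m, rfl⟩ : ∃ m, n = m + 1 := ⟨n-1, by omega⟩
      calc ‖T ^ (m+1) - L‖ ≤ 2 * (1/2:ℝ) ^ E8 m := key m
        _ ≤ 2 * (1/2:ℝ) ^ (k*(m+1)+1) := by
            refine mul_le_mul_of_nonneg_left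
              (pow_le_pow_of_le_one (by norm_num) (by norm_num) ?_) (by norm_num)
            simpa using harith
        _ = (1/2:ℝ) ^ (k*(m+1)) := by rw [pow_succ]; ring
    have h2 : ‖T ^ n - L‖ ^ ((1:ℝ)/n) ≤ ((1/2:ℝ) ^ (k*n)) ^ ((1:ℝ)/n) :=
      Real.rpow_le_rpow (norm_nonneg _) h1 (by positivity)
    have h3 : ((1/2:ℝ) ^ (k*n)) ^ ((1:ℝ)/n) = (1/2:ℝ) ^ k := by
      rw [← Real.rpow_natCast (1/2:ℝ) (k*n), ← Real.rpow_mul (by norm_num)]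
      rw [show ((k*n:ℕ):ℝ) * ((1:ℝ)/n) = (k:ℝ) by push_cast; field_simp]
      rw [Real.rpow_natCast]
    rw [Real.dist_eq, sub_zero, abs_of_nonneg (Real.rpow_nonneg (norm_nonneg _) _)]
    calc ‖T ^ n - L‖ ^ ((1:ℝ)/n) ≤ (1/2:ℝ) ^ k := h2.trans_eq h3
      _ < ε := hk
  -- not of the given form
  have hno : ∀ n : ℕ, ∀ c ∈ Icc (0:ℝ) 1,
      ∃ f : B, ∃ x ∈ Icc (0:ℝ) 1, ι ((T ^ n) f) x ≠ ι f c := by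
    intro n c hc
    obtain ⟨f, hf⟩ := hsurj id contDiffOn_id
    simp only [id_eq] at hf
    refine ⟨f, ?_⟩
    by_cases h0 : c = 0
    · refine ⟨1, ⟨zero_le_one, le_rfl⟩, ?_⟩
      rw [hTn n f 1 ⟨zero_le_one, le_rfl⟩,
        hf _ (psi8_iter_bound n 1 ⟨zero_le_one, le_rfl⟩).1, h0, hf 0 ⟨le_rfl, zero_le_one⟩]
      exact ne_of_gt (psi8_iter_pos n 1 zero_lt_one)
    · refine ⟨0, ⟨le_rfl, zero_le_one⟩, ?_⟩
      rw [hTn n f 0 ⟨le_rfl, zero_le_one⟩, psi8_iter_zero n,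
        hf 0 ⟨le_rfl, zero_le_one⟩, hf c hc]
      exact Ne.symm h0
  exact ⟨psi8_mem, hInter, (psi8_hasDerivAt 0).deriv, htend, hno⟩
end

section
/- Let E = ℓ^∞(ℕ × ℕ), 𝒳 its closed unit ball, and φ : 𝒳 → 𝒳 defined by (φ(x))_{j,k} = x_{j,k+1}/(k+1). Let p_{j,k} : 𝒳 → ℂ be the coordinate projections. Then for all n ≥ 1 and all j, p_{j,1} ∘ φ_n = p_{j,n+1}/(n+1)!, and the sequence (p_{j,1}∘φ_n)_{j=1}^∞ ⊆ C(𝒳), scaled by (n+1)!, consists of functions at uniform mutual distance ≥ 1 on 𝒳; hence (p_{j,1}∘φ_n)_j has no uniformly convergent subsequence, so the composition operator f ↦ f∘φ_n on the uniform algebra generated by the p_{j,k} is not compact for any n. -/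
open Filter

lemma iter_formula (φ : (ℕ × ℕ → ℂ) → (ℕ × ℕ → ℂ))
    (hφ : ∀ (x : ℕ × ℕ → ℂ) (j k : ℕ), φ x (j, k) = x (j, k + 1) / (k + 2)) :
    ∀ (n : ℕ) (x : ℕ × ℕ → ℂ) (j k : ℕ),
      φ^[n] x (j, k) = x (j, k + n) * ((k + 1).factorial : ℂ) / ((k + n + 1).factorial : ℂ) := by
  intro n
  induction n with
  | zero =>
    intro x j k
    simp only [Function.iterate_zero_apply, Nat.add_zero]
    rw [mul_div_assoc, div_self ((Nat.cast_ne_zero (R := ℂ)).2 (Nat.factorial_ne_zero _)), mul_one]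
  | succ n ih =>
    intro x j k
    rw [Function.iterate_succ_apply, ih (φ x) j k, hφ x j (k + n)]
    simp only [Nat.add_succ]
    have h2 : ∀ m : ℕ, ((m.factorial : ℂ)) ≠ 0 := fun m => Nat.cast_ne_zero.2 (Nat.factorial_ne_zero _)
    have h3 : ((k + n : ℕ) : ℂ) + 2 ≠ 0 := by
      intro h
      have := congrArg Complex.re h
      push_cast at this
      simp at this
      linarith [Nat.cast_nonneg (α := ℝ) (k + n)]
    have h1 : (((k + n + 1) + 1).factorial : ℂ) = ((k + n + 1).factorial : ℂ) * (((k + n : ℕ) : ℂ) + 2) := by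
      rw [Nat.factorial_succ]
      push_cast; ring
    rw [h1]
    field_simp

lemma key (φ : (ℕ × ℕ → ℂ) → (ℕ × ℕ → ℂ))
    (hφ : ∀ (x : ℕ × ℕ → ℂ) (j k : ℕ), φ x (j, k) = x (j, k + 1) / (k + 2))
    (n : ℕ) (x : ℕ × ℕ → ℂ) (j : ℕ) :
    φ^[n] x (j, 0) = x (j, n) / (Nat.factorial (n + 1) : ℂ) := by
  rw [iter_formula φ hφ n x j 0]
  simp [Nat.factorial]

/-- the witness function -/
noncomputable def wit (a b n : ℕ) : ℕ × ℕ → ℂ :=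
  fun p => if p = (a, n) then 1 else if p = (b, n) then -1 else 0

lemma wit_ball (a b n : ℕ) : ∀ p, ‖wit a b n p‖ ≤ 1 := by
  intro p
  unfold wit
  split_ifs <;> simp

lemma wit_a (a b n : ℕ) : wit a b n (a, n) = 1 := by simp [wit]

lemma wit_b (a b n : ℕ) (h : a ≠ b) : wit a b n (b, n) = -1 := by
  simp [wit, Prod.ext_iff, h.symm]

lemma fact_pos (n : ℕ) : (0 : ℝ) < (Nat.factorial (n + 1) : ℝ) := by
  exact_mod_cast Nat.factorial_pos _

lemma wit_dist (φ : (ℕ × ℕ → ℂ) → (ℕ × ℕ → ℂ))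
    (hφ : ∀ (x : ℕ × ℕ → ℂ) (j k : ℕ), φ x (j, k) = x (j, k + 1) / (k + 2))
    (n a b : ℕ) (h : a ≠ b) :
    ‖φ^[n] (wit a b n) (a, 0) - φ^[n] (wit a b n) (b, 0)‖ = 2 / (Nat.factorial (n + 1) : ℝ) := by
  rw [key φ hφ, key φ hφ, wit_a, wit_b a b n h, div_sub_div_same]
  rw [norm_div]
  norm_num

/-- For the weighted shift `φ` on the unit ball of `ℓ^∞(ℕ × ℕ)` (indices from `0`, weight
`k+2` on coordinate `k`): `p_{j,0}∘φ_n = p_{j,n}/(n+1)!`; for `j ≠ j'` the functions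
`p_{j,0}∘φ_n` and `p_{j',0}∘φ_n` are at uniform distance exactly `2/(n+1)!` on the ball
(so after scaling by `(n+1)!` they are at mutual distance `2 ≥ 1`); hence no subsequence of
`(p_{j,0}∘φ_n)_j` converges uniformly on the ball, so the composition operator `f ↦ f∘φ_n`
is not compact for any `n ≥ 1`. -/
theorem stmt_13 (φ : (ℕ × ℕ → ℂ) → (ℕ × ℕ → ℂ))
    (hφ : ∀ (x : ℕ × ℕ → ℂ) (j k : ℕ), φ x (j, k) = x (j, k + 1) / (k + 2)) :
    (∀ n : ℕ, 1 ≤ n → ∀ (x : ℕ × ℕ → ℂ) (j : ℕ),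
      φ^[n] x (j, 0) = x (j, n) / (Nat.factorial (n + 1) : ℂ)) ∧
    (∀ n : ℕ, 1 ≤ n → ∀ j j' : ℕ, j ≠ j' →
      sSup {r : ℝ | ∃ x : ℕ × ℕ → ℂ, (∀ p, ‖x p‖ ≤ 1) ∧
          r = ‖φ^[n] x (j, 0) - φ^[n] x (j', 0)‖} = 2 / (Nat.factorial (n + 1) : ℝ)) ∧
    (∀ n : ℕ, 1 ≤ n → ∀ s : ℕ → ℕ, StrictMono s → ∀ g : (ℕ × ℕ → ℂ) → ℂ,
      ¬ TendstoUniformlyOn (fun j (x : ℕ × ℕ → ℂ) => φ^[n] x (s j, 0)) g atTop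
          {x : ℕ × ℕ → ℂ | ∀ p, ‖x p‖ ≤ 1}) := by
  have hub : ∀ n : ℕ, ∀ j j' : ℕ, ∀ r ∈ {r : ℝ | ∃ x : ℕ × ℕ → ℂ, (∀ p, ‖x p‖ ≤ 1) ∧
      r = ‖φ^[n] x (j, 0) - φ^[n] x (j', 0)‖}, r ≤ 2 / (Nat.factorial (n + 1) : ℝ) := by
    intro n j j' r hr
    obtain ⟨x, hx, rfl⟩ := hr
    rw [key φ hφ, key φ hφ, div_sub_div_same, norm_div, Complex.norm_natCast]
    exact (div_le_div_iff_of_pos_right (fact_pos n)).2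
      ((norm_sub_le _ _).trans (by linarith [hx (j, n), hx (j', n)]))
  refine ⟨fun n _ => key φ hφ n, fun n hn j j' hjj => ?_, fun n hn s hs g hconv => ?_⟩
  · apply le_antisymm
    · exact csSup_le ⟨_, wit j j' n, wit_ball j j' n, rfl⟩ (hub n j j')
    · apply le_csSup ⟨_, hub n j j'⟩
      exact ⟨wit j j' n, wit_ball j j' n, (wit_dist φ hφ n j j' hjj).symm⟩
  · rw [Metric.tendstoUniformlyOn_iff] at hconv
    obtain ⟨J, hJ⟩ := eventually_atTop.1
      (hconv (1 / (Nat.factorial (n + 1) : ℝ)) (by positivity))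
    have hab : s J ≠ s (J + 1) := (hs (Nat.lt_succ_self J)).ne
    set w := wit (s J) (s (J + 1)) n with hw
    have hwmem : w ∈ {x : ℕ × ℕ → ℂ | ∀ p, ‖x p‖ ≤ 1} := wit_ball _ _ _
    have d1 := hJ J le_rfl w hwmem
    have d2 := hJ (J + 1) (Nat.le_succ J) w hwmem
    have hd := wit_dist φ hφ n (s J) (s (J + 1)) hab
    have tri : dist (φ^[n] w (s J, 0)) (φ^[n] w (s (J + 1), 0)) ≤
        dist (g w) (φ^[n] w (s J, 0)) + dist (g w) (φ^[n] w (s (J + 1), 0)) := by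
      rw [dist_comm (g w) (φ^[n] w (s J, 0))]
      exact dist_triangle _ _ _
    rw [Complex.dist_eq] at tri
    rw [← hw] at hd
    rw [hd] at tri
    have hring : (2 : ℝ) / (Nat.factorial (n + 1) : ℝ) =
        1 / (Nat.factorial (n + 1) : ℝ) + 1 / (Nat.factorial (n + 1) : ℝ) := by ring
    linarith
end

section
/- Let φ : [0,1] → [0,1] be continuously differentiable with ⋂_n φ_n([0,1]) = {x₀} and φ'(x₀) ≠ 0. Then for each n one may choose x_n → x₀ and f_n ∈ C¹[0,1] with ‖f_n‖_{C¹} ≤ 1 + 1/n, f_n'(φ(x_n)) = −1, f_n'(x₀) = 1, and for every compact operator K on C¹[0,1], the composition operator Tf = f∘φ satisfies ‖T − K‖ ≥ |φ'(x₀)|/2. Hence the distance from T to the compact operators is at least |φ'(x₀)|/2 > 0. -/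
open Set Filter Real

noncomputable def midf (u : ℝ) : ℝ := u/2 + Real.sin (2*u)/4
noncomputable def clampf (u : ℝ) : ℝ := max (-(π/2)) (min u (π/2))
noncomputable def Θf (u : ℝ) : ℝ := midf (clampf u)
noncomputable def ψf (u : ℝ) : ℝ := Real.cos (clampf u) ^ 2

lemma hasDerivAt_midf (u : ℝ) : HasDerivAt midf (Real.cos u ^ 2) u := by
  have h1 : HasDerivAt (fun u : ℝ => u/2 + Real.sin (2*u)/4)
      (1/2 + (Real.cos (2*u) * 2)/4) u := by
    have := ((Real.hasDerivAt_sin (2*u)).comp u (hasDerivAt_id u |>.const_mul 2)).div_const 4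
    have h2 := (hasDerivAt_id u |>.div_const 2).add this
    exact h2.congr_deriv (by ring)
  have : (1/2 + (Real.cos (2*u) * 2)/4) = Real.cos u ^ 2 := by
    rw [Real.cos_sq]; ring
  rw [← this]; exact h1

lemma midf_mono : Monotone midf := by
  have : ∀ u : ℝ, 0 ≤ Real.cos u ^ 2 := fun u => sq_nonneg _
  exact monotone_of_deriv_nonneg (fun u => (hasDerivAt_midf u).differentiableAt)
    (fun u => by rw [(hasDerivAt_midf _).deriv]; exact this u)

lemma pi2pos : 0 < π/2 := by positivity

lemma clampf_of_mem {u : ℝ} (h1 : -(π/2) ≤ u) (h2 : u ≤ π/2) : clampf u = u := by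
  unfold clampf; rw [min_eq_left h2, max_eq_right h1]

lemma clampf_of_ge {u : ℝ} (h : π/2 ≤ u) : clampf u = π/2 := by
  unfold clampf
  rw [min_eq_right h, max_eq_right (by linarith [pi2pos])]

lemma clampf_of_le {u : ℝ} (h : u ≤ -(π/2)) : clampf u = -(π/2) := by
  unfold clampf
  have h' : u ≤ π/2 := by linarith [pi2pos]
  rw [min_eq_left h', max_eq_left h]

lemma clampf_mem (u : ℝ) : -(π/2) ≤ clampf u ∧ clampf u ≤ π/2 := by
  constructor
  · exact le_max_left _ _
  · rcases le_total u (π/2) with h|h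
    · unfold clampf; rw [min_eq_left h]; exact max_le (by linarith [pi2pos]) h
    · rw [clampf_of_ge h]

lemma midf_pi2 : midf (π/2) = π/4 := by
  unfold midf
  rw [show 2 * (π/2) = π by ring, Real.sin_pi]; ring

lemma midf_neg_pi2 : midf (-(π/2)) = -(π/4) := by
  unfold midf
  rw [show 2 * (-(π/2)) = -π by ring, Real.sin_neg, Real.sin_pi]; ring

lemma Θf_abs (u : ℝ) : |Θf u| ≤ π/4 := by
  obtain ⟨h1, h2⟩ := clampf_mem u
  have l1 := midf_mono h1
  have l2 := midf_mono h2
  rw [midf_pi2] at l2; rw [midf_neg_pi2] at l1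
  exact abs_le.2 ⟨l1, l2⟩

lemma ψf_nonneg (u : ℝ) : 0 ≤ ψf u := sq_nonneg _
lemma ψf_le_one (u : ℝ) : ψf u ≤ 1 := by
  unfold ψf
  have h1 := Real.neg_one_le_cos (clampf u)
  have h2 := Real.cos_le_one (clampf u)
  nlinarith

lemma ψf_zero : ψf 0 = 1 := by
  unfold ψf
  rw [clampf_of_mem (by linarith [pi2pos]) (by linarith [pi2pos]), Real.cos_zero]; norm_num

lemma ψf_of_ge {u : ℝ} (h : π/2 ≤ |u|) : ψf u = 0 := by
  unfold ψf
  rcases le_or_gt (π/2) u with h'|h'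
  · rw [clampf_of_ge h', Real.cos_pi_div_two]; ring
  · have : u ≤ -(π/2) := by
      rcases abs_cases u with ⟨he,_⟩|⟨he,_⟩ <;> linarith
    rw [clampf_of_le this, Real.cos_neg, Real.cos_pi_div_two]; ring

lemma ψf_ne_zero {u : ℝ} (h : ψf u ≠ 0) : |u| < π/2 := by
  by_contra h'
  exact h (ψf_of_ge (le_of_not_gt h'))

lemma continuous_ψf : Continuous ψf := by
  unfold ψf clampf
  fun_prop

lemma Θf_sub_le (a y : ℝ) (ha : -(π/2) ≤ a ∧ a ≤ π/2) :
    |Θf y - midf a| ≤ |midf y - midf a| := by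
  unfold Θf
  rcases le_or_gt y (-(π/2)) with h|h
  · rw [clampf_of_le h]
    have l1 : midf y ≤ midf (-(π/2)) := midf_mono h
    have l2 : midf (-(π/2)) ≤ midf a := midf_mono ha.1
    rw [abs_le]; constructor <;> rcases abs_cases (midf y - midf a) with ⟨he,_⟩|⟨he,_⟩ <;> linarith
  · rcases le_or_gt (π/2) y with h'|h'
    · rw [clampf_of_ge h']
      have l1 : midf (π/2) ≤ midf y := midf_mono h'
      have l2 : midf a ≤ midf (π/2) := midf_mono ha.2
      rw [abs_le]; constructor <;> rcases abs_cases (midf y - midf a) with ⟨he,_⟩|⟨he,_⟩ <;> linarith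
    · rw [clampf_of_mem h.le h'.le]

lemma Θf_hasDerivAt_edge {a : ℝ} (ha : -(π/2) ≤ a ∧ a ≤ π/2) (hca : Real.cos a = 0)
    (hΘa : Θf a = midf a) : HasDerivAt Θf 0 a := by
  rw [hasDerivAt_iff_isLittleO]
  have hmid : (fun y => midf y - midf a) =o[nhds a] fun y => y - a := by
    have := hasDerivAt_iff_isLittleO.mp (hasDerivAt_midf a)
    rw [hca] at this
    simpa using this
  have hBO : (fun y => Θf y - Θf a) =O[nhds a] fun y => midf y - midf a := by
    apply Asymptotics.isBigO_of_le
    intro y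
    rw [hΘa]
    simpa [Real.norm_eq_abs] using Θf_sub_le a y ha
  simpa using hBO.trans_isLittleO hmid

lemma hasDerivAt_Θf (u : ℝ) : HasDerivAt Θf (ψf u) u := by
  rcases lt_trichotomy u (-(π/2)) with h|h|h
  · have : ψf u = 0 := ψf_of_ge (by rw [abs_of_neg (by linarith [pi2pos] : u < 0)]; linarith)
    rw [this]
    apply HasDerivAt.congr_of_eventuallyEq (hasDerivAt_const u (midf (-(π/2))))
    filter_upwards [Iio_mem_nhds h] with y hy
    unfold Θf; rw [clampf_of_le (le_of_lt hy)]
  · subst h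
    have : ψf (-(π/2)) = 0 := ψf_of_ge (by rw [abs_neg, abs_of_pos pi2pos])
    rw [this]
    apply Θf_hasDerivAt_edge ⟨le_refl _, by linarith [pi2pos]⟩
    · rw [Real.cos_neg, Real.cos_pi_div_two]
    · unfold Θf; rw [clampf_of_le (le_refl _)]
  · rcases lt_trichotomy u (π/2) with h'|h'|h'
    · have : ψf u = Real.cos u ^ 2 := by unfold ψf; rw [clampf_of_mem h.le h'.le]
      rw [this]
      apply HasDerivAt.congr_of_eventuallyEq (hasDerivAt_midf u)
      filter_upwards [Ioo_mem_nhds h h'] with y hy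
      unfold Θf; rw [clampf_of_mem hy.1.le hy.2.le]
    · subst h'
      have : ψf (π/2) = 0 := ψf_of_ge (by rw [abs_of_pos pi2pos])
      rw [this]
      apply Θf_hasDerivAt_edge ⟨by linarith [pi2pos], le_refl _⟩ Real.cos_pi_div_two
      unfold Θf; rw [clampf_of_ge (le_refl _)]
    · have : ψf u = 0 := ψf_of_ge (by rw [abs_of_pos (by linarith [pi2pos])]; linarith)
      rw [this]
      apply HasDerivAt.congr_of_eventuallyEq (hasDerivAt_const u (midf (π/2)))
      filter_upwards [Ioi_mem_nhds h'] with y hy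
      unfold Θf; rw [clampf_of_ge (le_of_lt hy)]

lemma bump_exists (x₀ p : ℝ) (hne : p ≠ x₀) :
    ∃ g : ℝ → ℝ, ContDiff ℝ 1 g ∧ (∀ y, |g y| ≤ |x₀ - p| / 2) ∧
      (∀ y, |deriv g y| ≤ 1) ∧ deriv g x₀ = 1 ∧ deriv g p = -1 := by
  set w : ℝ := (x₀ - p)/π with hw
  have hπ : (0:ℝ) < π := Real.pi_pos
  have hsub : x₀ - p ≠ 0 := sub_ne_zero.2 (Ne.symm hne)
  have hwne : w ≠ 0 := div_ne_zero hsub (ne_of_gt hπ)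
  set g : ℝ → ℝ := fun y => w * Θf ((y - x₀)/w) - w * Θf ((y - p)/w) with hg
  have hD : ∀ y, HasDerivAt g (ψf ((y - x₀)/w) - ψf ((y - p)/w)) y := by
    intro y
    have l : ∀ a : ℝ, HasDerivAt (fun y => w * Θf ((y - a)/w)) (ψf ((y - a)/w)) y := by
      intro a
      have h1 : HasDerivAt (fun y : ℝ => (y - a)/w) (1/w) y := by
        simpa using ((hasDerivAt_id y).sub_const a).div_const w
      have h2 := (hasDerivAt_Θf ((y - a)/w)).comp y h1
      have h3 := h2.const_mul w
      have : w * (ψf ((y - a)/w) * (1/w)) = ψf ((y - a)/w) := by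
        field_simp
      rw [this] at h3
      exact h3
    exact (l x₀).sub (l p)
  have hderiv : ∀ y, deriv g y = ψf ((y - x₀)/w) - ψf ((y - p)/w) := fun y => (hD y).deriv
  have habsw : |w| = |x₀ - p| / π := by rw [hw, abs_div, abs_of_pos hπ]
  refine ⟨g, ?_, ?_, ?_, ?_, ?_⟩
  · rw [contDiff_one_iff_deriv]
    constructor
    · exact fun y => (hD y).differentiableAt
    · have : deriv g = fun y => ψf ((y - x₀)/w) - ψf ((y - p)/w) := funext hderiv
      rw [this]
      exact ((continuous_ψf.comp (by fun_prop)).sub (continuous_ψf.comp (by fun_prop)))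
  · intro y
    have b1 := Θf_abs ((y - x₀)/w)
    have b2 := Θf_abs ((y - p)/w)
    have : |g y| ≤ |w| * |Θf ((y - x₀)/w)| + |w| * |Θf ((y - p)/w)| := by
      rw [hg]
      calc |w * Θf ((y - x₀)/w) - w * Θf ((y - p)/w)|
          ≤ |w * Θf ((y - x₀)/w)| + |w * Θf ((y - p)/w)| := abs_sub _ _
        _ = |w| * |Θf ((y - x₀)/w)| + |w| * |Θf ((y - p)/w)| := by rw [abs_mul, abs_mul]
    have hw4 : |w| * (π/4) + |w| * (π/4) = |x₀ - p|/2 := by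
      rw [habsw]; field_simp; ring
    have hwnn : (0:ℝ) ≤ |w| := abs_nonneg w
    nlinarith [mul_le_mul_of_nonneg_left b1 hwnn, mul_le_mul_of_nonneg_left b2 hwnn]
  · intro y
    rw [hderiv y]
    have key : ψf ((y - x₀)/w) = 0 ∨ ψf ((y - p)/w) = 0 := by
      by_contra h
      push_neg at h
      have h1 := ψf_ne_zero h.1
      have h2 := ψf_ne_zero h.2
      rw [abs_div] at h1 h2
      have hwpos : 0 < |w| := abs_pos.2 hwne
      have e1 : |y - x₀| < π/2 * |w| := by
        rw [div_lt_iff₀ hwpos] at h1; linarith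
      have e2 : |y - p| < π/2 * |w| := by
        rw [div_lt_iff₀ hwpos] at h2; linarith
      have : |x₀ - p| ≤ |y - x₀| + |y - p| := by
        calc |x₀ - p| = |(x₀ - y) + (y - p)| := by ring_nf
          _ ≤ |x₀ - y| + |y - p| := abs_add_le _ _
          _ = |y - x₀| + |y - p| := by rw [abs_sub_comm]
      rw [habsw] at e1 e2
      have : |x₀ - p| < π/2 * (|x₀ - p|/π) + π/2 * (|x₀ - p|/π) := by linarith
      have heq : π/2 * (|x₀ - p|/π) + π/2 * (|x₀ - p|/π) = |x₀ - p| := by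
        field_simp; ring
      linarith [heq ▸ this]
    have n1 := ψf_nonneg ((y - x₀)/w); have n2 := ψf_nonneg ((y - p)/w)
    have m1 := ψf_le_one ((y - x₀)/w); have m2 := ψf_le_one ((y - p)/w)
    rcases key with h|h <;> rw [h] <;> rw [abs_le] <;> constructor <;> linarith
  · rw [hderiv x₀]
    have e0 : (x₀ - x₀)/w = 0 := by simp
    have e1 : (x₀ - p)/w = π := by
      rw [hw]; field_simp
    rw [e0, e1, ψf_zero, ψf_of_ge (by rw [abs_of_pos hπ]; linarith)]
    ring
  · rw [hderiv p]
    have e0 : (p - p)/w = 0 := by simp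
    have e1 : (p - x₀)/w = -π := by
      rw [hw]; field_simp; ring
    rw [e0, e1, ψf_zero, ψf_of_ge (by rw [abs_neg, abs_of_pos hπ]; linarith)]
    ring



open Set Filter

/-- `C¹[0,1]` is modeled by a Banach space `B` with a linear realization `ι` as the `C¹`
functions on `[0,1]`, carrying the norm `‖f‖ = ‖f‖_∞ + ‖f'‖_∞` (derivatives within
`[0,1]`). Let `φ : [0,1] → [0,1]` be `C¹` with `⋂_n φ_n([0,1]) = {x₀}` and `φ'(x₀) ≠ 0`,
and let `T` be the composition operator `Tf = f∘φ`. Then one may choose `x_n → x₀` in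
`[0,1]` and `f_n` with `‖f_n‖ ≤ 1 + 1/n`, `f_n'(φ(x_n)) = -1`, `f_n'(x₀) = 1`, and for
every compact operator `K` one has `‖T - K‖ ≥ |φ'(x₀)|/2`; hence the distance from `T` to
the compact operators is at least `|φ'(x₀)|/2 > 0`. -/
theorem stmt_19
    {B : Type*} [NormedAddCommGroup B] [NormedSpace ℝ B] [CompleteSpace B]
    (ι : B →ₗ[ℝ] (ℝ → ℝ))
    (hnorm : ∀ f : B, ‖f‖ = (⨆ x : Icc (0:ℝ) 1, |ι f (x : ℝ)|) +
        (⨆ x : Icc (0:ℝ) 1, |derivWithin (ι f) (Icc (0:ℝ) 1) (x : ℝ)|))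
    (hC1 : ∀ f : B, ContDiffOn ℝ 1 (ι f) (Icc (0:ℝ) 1))
    (hsurj : ∀ g : ℝ → ℝ, ContDiffOn ℝ 1 g (Icc (0:ℝ) 1) →
      ∃ f : B, ∀ x ∈ Icc (0:ℝ) 1, ι f x = g x)
    (φ : ℝ → ℝ) (hφmaps : MapsTo φ (Icc (0:ℝ) 1) (Icc (0:ℝ) 1))
    (hφ : ContDiffOn ℝ 1 φ (Icc (0:ℝ) 1))
    (x₀ : ℝ) (hx₀ : x₀ ∈ Icc (0:ℝ) 1)
    (hinter : (⋂ n : ℕ, φ^[n] '' Icc (0:ℝ) 1) = {x₀})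
    (hder : derivWithin φ (Icc (0:ℝ) 1) x₀ ≠ 0)
    (T : B →L[ℝ] B)
    (hT : ∀ f : B, ∀ x ∈ Icc (0:ℝ) 1, ι (T f) x = ι f (φ x)) :
    (∃ xs : ℕ → ℝ, (∀ n, xs n ∈ Icc (0:ℝ) 1) ∧ Tendsto xs atTop (nhds x₀) ∧
      ∃ fs : ℕ → B, ∀ n : ℕ, 1 ≤ n → ‖fs n‖ ≤ 1 + 1 / (n : ℝ) ∧
        derivWithin (ι (fs n)) (Icc (0:ℝ) 1) (φ (xs n)) = -1 ∧
        derivWithin (ι (fs n)) (Icc (0:ℝ) 1) x₀ = 1) ∧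
    (∀ K : B →L[ℝ] B, IsCompactOperator (K : B → B) →
      |derivWithin φ (Icc (0:ℝ) 1) x₀| / 2 ≤ ‖T - K‖) ∧
    0 < |derivWithin φ (Icc (0:ℝ) 1) x₀| / 2 := by
  set I : Set ℝ := Icc (0:ℝ) 1 with hI
  set c : ℝ := derivWithin φ I x₀ with hc
  have hud : UniqueDiffOn ℝ I := uniqueDiffOn_Icc zero_lt_one
  haveI : Nonempty ↥I := ⟨⟨0, by constructor <;> norm_num⟩⟩
  -- φ fixes x₀
  have hx₀inter : x₀ ∈ ⋂ n : ℕ, φ^[n] '' I := by rw [hinter]; rfl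
  have hfix : φ x₀ = x₀ := by
    have hmem : φ x₀ ∈ ⋂ n : ℕ, φ^[n] '' I := by
      rw [mem_iInter]
      intro n
      cases n with
      | zero => simpa using hφmaps hx₀
      | succ m =>
        have : x₀ ∈ φ^[m] '' I := (mem_iInter.mp hx₀inter) m
        obtain ⟨y, hy, hyx⟩ := this
        exact ⟨y, hy, by rw [Function.iterate_succ_apply', hyx]⟩
    rw [hinter] at hmem
    exact hmem
  -- derivWithin bound by norm
  have hbdd : ∀ h : B, BddAbove (Set.range fun p : ↥I => |derivWithin (ι h) I (p : ℝ)|) := by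
    intro h
    have hcont : ContinuousOn (fun x => |derivWithin (ι h) I x|) I :=
      ((hC1 h).continuousOn_derivWithin hud le_rfl).abs
    have hb := (isCompact_Icc.image_of_continuousOn hcont).bddAbove
    rwa [Set.image_eq_range] at hb
  have hle : ∀ h : B, ∀ x ∈ I, |derivWithin (ι h) I x| ≤ ‖h‖ := by
    intro h x hx
    have h1 : (0:ℝ) ≤ ⨆ p : ↥I, |ι h (p : ℝ)| :=
      Real.iSup_nonneg fun p => abs_nonneg _
    have h2 : |derivWithin (ι h) I x| ≤ ⨆ p : ↥I, |derivWithin (ι h) I (p : ℝ)| :=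
      le_ciSup (hbdd h) ⟨x, hx⟩
    rw [hnorm h]
    exact le_add_of_nonneg_of_le h1 h2
  -- chain rule for T
  have hchain : ∀ f : B, ∀ x ∈ I,
      derivWithin (ι (T f)) I x = derivWithin (ι f) I (φ x) * derivWithin φ I x := by
    intro f x hx
    have he : derivWithin (ι (T f)) I x = derivWithin (ι f ∘ φ) I x :=
      derivWithin_congr (fun y hy => hT f y hy) (hT f x hx)
    rw [he]
    exact derivWithin_comp x ((hC1 f).differentiableOn one_ne_zero _ (hφmaps hx))
      ((hφ.differentiableOn one_ne_zero) x hx) hφmaps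
  -- selection of points
  have hslope : HasDerivWithinAt φ c I x₀ :=
    ((hφ.differentiableOn one_ne_zero) x₀ hx₀).hasDerivWithinAt
  have hclos : x₀ ∈ closure (I \ {x₀}) := by
    rcases lt_or_eq_of_le hx₀.2 with h1|h1
    · have hsub : Ioc x₀ 1 ⊆ I \ {x₀} := by
        intro z hz
        exact ⟨⟨le_trans hx₀.1 hz.1.le, hz.2⟩, ne_of_gt hz.1⟩
      refine closure_mono hsub ?_
      rw [closure_Ioc (ne_of_lt h1)]
      exact ⟨le_refl _, h1.le⟩
    · have hsub : Ico 0 1 ⊆ I \ {x₀} := by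
        intro z hz
        exact ⟨⟨hz.1, hz.2.le⟩, by rw [h1]; exact ne_of_lt hz.2⟩
      refine closure_mono hsub ?_
      rw [closure_Ico (by norm_num : (0:ℝ) ≠ 1)]
      exact hx₀
  haveI hNB : (nhdsWithin x₀ (I \ {x₀})).NeBot := mem_closure_iff_nhdsWithin_neBot.mp hclos
  have hev1 : ∀ᶠ x in nhdsWithin x₀ (I \ {x₀}), φ x ≠ x₀ := by
    have hsl := hasDerivWithinAt_iff_tendsto_slope.mp hslope
    filter_upwards [hsl.eventually_ne hder, self_mem_nhdsWithin] with x hs hxm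
    intro hcon
    apply hs
    rw [slope_def_field, hcon, hfix, sub_self, zero_div]
  have hsel : ∀ n : ℕ, ∃ x, x ∈ I ∧ φ x ≠ x₀ ∧ |x - x₀| ≤ 1/((n:ℝ)+1) ∧ |φ x - x₀| ≤ 2/((n:ℝ)+1) := by
    intro n
    have hp1 : (0:ℝ) < 1/((n:ℝ)+1) := by positivity
    have hp2 : (0:ℝ) < 2/((n:ℝ)+1) := by positivity
    have hev2 : ∀ᶠ x in nhdsWithin x₀ (I \ {x₀}), |x - x₀| ≤ 1/((n:ℝ)+1) := by
      apply eventually_nhdsWithin_of_eventually_nhds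
      filter_upwards [Metric.closedBall_mem_nhds x₀ hp1] with y hy
      simpa [Real.dist_eq] using hy
    have hev3 : ∀ᶠ x in nhdsWithin x₀ (I \ {x₀}), |φ x - x₀| ≤ 2/((n:ℝ)+1) := by
      have hcont : Tendsto φ (nhdsWithin x₀ I) (nhds x₀) := by
        have := (hφ.continuousOn x₀ hx₀)
        rwa [ContinuousWithinAt, hfix] at this
      have hcont' : Tendsto φ (nhdsWithin x₀ (I \ {x₀})) (nhds x₀) :=
        hcont.mono_left (nhdsWithin_mono x₀ diff_subset)
      have hball : ∀ᶠ y in nhds x₀, |y - x₀| ≤ 2/((n:ℝ)+1) := by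
        filter_upwards [Metric.closedBall_mem_nhds x₀ hp2] with y hy
        simpa [Real.dist_eq] using hy
      exact hcont' hball
    have hmem : ∀ᶠ x in nhdsWithin x₀ (I \ {x₀}), x ∈ I \ {x₀} := self_mem_nhdsWithin
    obtain ⟨x, ⟨hA, hB⟩, hC, hD⟩ := ((hev1.and hev2).and (hev3.and hmem)).exists
    exact ⟨x, hD.1, hA, hB, hC⟩
  choose ξ hξI hξne hξx hξφx using hsel
  -- construction of the functions
  have hfn : ∀ n : ℕ, ∃ f : B, ‖f‖ ≤ 1/((n:ℝ)+1) + 1 ∧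
      derivWithin (ι f) I (φ (ξ n)) = -1 ∧ derivWithin (ι f) I x₀ = 1 := by
    intro n
    obtain ⟨g, hgC1, hgbd, hgdbd, hgx₀, hgp⟩ := bump_exists x₀ (φ (ξ n)) (hξne n)
    obtain ⟨f, hf⟩ := hsurj g (hgC1.contDiffOn)
    have hdw : ∀ x ∈ I, derivWithin (ι f) I x = deriv g x := by
      intro x hx
      rw [derivWithin_congr (fun y hy => hf y hy) (hf x hx)]
      exact ((hgC1.differentiable one_ne_zero) x).derivWithin (hud x hx)
    refine ⟨f, ?_, ?_, ?_⟩
    · rw [hnorm f]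
      have hA : (⨆ p : ↥I, |ι f (p : ℝ)|) ≤ 1/((n:ℝ)+1) := by
        apply ciSup_le
        intro p
        rw [hf p p.2]
        calc |g (p:ℝ)| ≤ |x₀ - φ (ξ n)|/2 := hgbd _
          _ ≤ (2/((n:ℝ)+1))/2 := by
              have := hξφx n
              rw [abs_sub_comm] at this
              linarith
          _ = 1/((n:ℝ)+1) := by ring
      have hB : (⨆ p : ↥I, |derivWithin (ι f) I (p : ℝ)|) ≤ 1 := by
        apply ciSup_le
        intro p
        rw [hdw p p.2]
        exact hgdbd _
      linarith
    · rw [hdw _ (hφmaps (hξI n))]; exact hgp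
    · rw [hdw _ hx₀]; exact hgx₀
  choose F hFnorm hFd1 hFd2 using hfn
  -- the sequences
  set xs : ℕ → ℝ := fun n => if n = 0 then x₀ else ξ (n - 1) with hxs
  set fs : ℕ → B := fun n => if n = 0 then F 0 else F (n - 1) with hfs
  have hxsI : ∀ n, xs n ∈ I := by
    intro n
    rw [hxs]
    cases n with
    | zero => simpa using hx₀
    | succ m => simpa using hξI m
  have hxsdist : ∀ n : ℕ, 1 ≤ n → dist (xs n) x₀ ≤ 1/(n:ℝ) := by
    intro n hn
    match n, hn with
    | (m+1), _ =>
      have := hξx m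
      rw [hxs]
      simp only [Nat.add_sub_cancel, Nat.succ_ne_zero, if_false]
      rw [Real.dist_eq]
      convert this using 2
      push_cast; ring
  have hxstend : Tendsto xs atTop (nhds x₀) := by
    rw [tendsto_iff_dist_tendsto_zero]
    apply squeeze_zero' (Eventually.of_forall fun n => dist_nonneg)
      (eventually_atTop.2 ⟨1, hxsdist⟩) tendsto_one_div_atTop_nhds_zero_nat
  have hfsprop : ∀ n : ℕ, 1 ≤ n → ‖fs n‖ ≤ 1 + 1/(n:ℝ) ∧
      derivWithin (ι (fs n)) I (φ (xs n)) = -1 ∧ derivWithin (ι (fs n)) I x₀ = 1 := by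
    intro n hn
    match n, hn with
    | (m+1), _ =>
      have e1 : fs (m+1) = F m := by rw [hfs]; simp
      have e2 : xs (m+1) = ξ m := by rw [hxs]; simp
      have e3 : ((m:ℝ)+1) = ((m+1 : ℕ) : ℝ) := by push_cast; ring
      refine ⟨?_, ?_, ?_⟩
      · rw [e1]
        have := hFnorm m
        rw [e3] at this
        linarith
      · rw [e1, e2]; exact hFd1 m
      · rw [e1]; exact hFd2 m
  have hfsnorm2 : ∀ n, ‖fs n‖ ≤ 2 := by
    intro n
    cases n with
    | zero =>
      have h := hFnorm 0
      norm_num at h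
      simpa [hfs] using h
    | succ m =>
      have := (hfsprop (m+1) (Nat.le_add_left 1 m)).1
      have h1 : 1/((m+1:ℕ):ℝ) ≤ 1 := by
        rw [div_le_one (by positivity)]
        push_cast; linarith [Nat.cast_nonneg (α := ℝ) m]
      linarith
  refine ⟨⟨xs, hxsI, hxstend, fs, hfsprop⟩, ?_, ?_⟩
  · -- the compact operator estimate
    intro K hK
    obtain ⟨C, hCcomp, hCnhds⟩ := hK
    obtain ⟨r, hr, hball⟩ := Metric.mem_nhds_iff.mp hCnhds
    have hu : ∀ n, K ((r/4) • fs n) ∈ C := by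
      intro n
      apply hball
      rw [mem_ball_zero_iff, norm_smul]
      have h1 : ‖(r/4 : ℝ)‖ = r/4 := by
        rw [Real.norm_eq_abs, abs_of_pos (by linarith)]
      rw [h1]
      have := hfsnorm2 n
      nlinarith
    obtain ⟨g₀, hg₀C, σ, hσ, hconv⟩ := hCcomp.tendsto_subseq hu
    set G : B := (4/r) • g₀ with hG
    have hKconv : Tendsto (fun k => K (fs (σ k))) atTop (nhds G) := by
      have h1 : ∀ k, ((4:ℝ)/r) • ((fun n => K ((r/4) • fs n)) ∘ σ) k = K (fs (σ k)) := by
        intro k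
        simp only [Function.comp_apply, map_smul, smul_smul]
        rw [show (4/r) * (r/4) = (1:ℝ) by field_simp, one_smul]
      have h2 := hconv.const_smul ((4:ℝ)/r)
      exact Tendsto.congr h1 h2
    have hKnorm0 : Tendsto (fun k => ‖K (fs (σ k)) - G‖) atTop (nhds 0) := by
      have := (hKconv.sub_const G).norm
      simpa using this
    set dG : ℝ → ℝ := derivWithin (ι G) I with hdG
    have hdGcont : ContinuousOn dG I := (hC1 G).continuousOn_derivWithin hud le_rfl
    have hdiffι : ∀ h : B, ∀ x ∈ I, DifferentiableWithinAt ℝ (ι h) I x :=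
      fun h x hx => (hC1 h).differentiableOn one_ne_zero x hx
    have hDsub : ∀ n, ∀ x ∈ I, derivWithin (ι (T (fs n) - G)) I x
        = derivWithin (ι (T (fs n))) I x - dG x := by
      intro n x hx
      rw [map_sub]
      exact derivWithin_sub (hdiffι _ x hx) (hdiffι _ x hx)
    have hTat : ∀ n, 1 ≤ n → derivWithin (ι (T (fs n))) I x₀ = c := by
      intro n hn
      rw [hchain (fs n) x₀ hx₀, hfix, (hfsprop n hn).2.2, one_mul]
    have hTat2 : ∀ n, 1 ≤ n →
        derivWithin (ι (T (fs n))) I (xs n) = -(derivWithin φ I (xs n)) := by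
      intro n hn
      rw [hchain (fs n) (xs n) (hxsI n), (hfsprop n hn).2.1]
      ring
    have hEst : ∀ n, 1 ≤ n →
        |c - dG x₀| + |derivWithin φ I (xs n) + dG (xs n)|
          ≤ 2*(2*‖T - K‖ + ‖K (fs n) - G‖) := by
      intro n hn
      have h1 : |c - dG x₀| ≤ ‖T (fs n) - G‖ := by
        have hl := hle (T (fs n) - G) x₀ hx₀
        rw [hDsub n x₀ hx₀, hTat n hn] at hl
        exact hl
      have h2 : |derivWithin φ I (xs n) + dG (xs n)| ≤ ‖T (fs n) - G‖ := by
        have hl := hle (T (fs n) - G) (xs n) (hxsI n)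
        rw [hDsub n (xs n) (hxsI n), hTat2 n hn,
          show -(derivWithin φ I (xs n)) - dG (xs n)
            = -(derivWithin φ I (xs n) + dG (xs n)) by ring, abs_neg] at hl
        exact hl
      have h3 : ‖T (fs n) - G‖ ≤ 2*‖T - K‖ + ‖K (fs n) - G‖ := by
        have e : T (fs n) - G = (T - K) (fs n) + (K (fs n) - G) := by
          simp only [ContinuousLinearMap.sub_apply]
          abel
        calc ‖T (fs n) - G‖ = ‖(T - K) (fs n) + (K (fs n) - G)‖ := by rw [e]
          _ ≤ ‖(T - K) (fs n)‖ + ‖K (fs n) - G‖ := norm_add_le _ _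
          _ ≤ ‖T - K‖ * ‖fs n‖ + ‖K (fs n) - G‖ := by
              gcongr
              exact (T - K).le_opNorm _
          _ ≤ ‖T - K‖ * 2 + ‖K (fs n) - G‖ := by
              have := hfsnorm2 n
              nlinarith [norm_nonneg (T - K), norm_nonneg (K (fs n) - G)]
          _ = 2*‖T - K‖ + ‖K (fs n) - G‖ := by ring
      linarith
    have hxsσ : Tendsto (fun k => xs (σ k)) atTop (nhdsWithin x₀ I) := by
      rw [tendsto_nhdsWithin_iff]
      exact ⟨hxstend.comp hσ.tendsto_atTop, Eventually.of_forall fun k => hxsI _⟩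
    have hφ'cont : ContinuousOn (derivWithin φ I) I :=
      hφ.continuousOn_derivWithin hud le_rfl
    have hL1 : Tendsto (fun k => |c - dG x₀| + |derivWithin φ I (xs (σ k)) + dG (xs (σ k))|)
        atTop (nhds (|c - dG x₀| + |c + dG x₀|)) := by
      apply Tendsto.const_add
      apply Tendsto.abs
      exact Tendsto.add (Filter.Tendsto.comp (hφ'cont x₀ hx₀) hxsσ)
        (Filter.Tendsto.comp (hdGcont x₀ hx₀) hxsσ)
    have hR1 : Tendsto (fun k => 2*(2*‖T - K‖ + ‖K (fs (σ k)) - G‖))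
        atTop (nhds (2*(2*‖T - K‖ + 0))) := by
      exact (Tendsto.const_add _ hKnorm0).const_mul 2
    have key : |c - dG x₀| + |c + dG x₀| ≤ 2*(2*‖T - K‖ + 0) := by
      apply le_of_tendsto_of_tendsto hL1 hR1
      filter_upwards [eventually_ge_atTop 1] with k hk
      exact hEst (σ k) (le_trans hk hσ.le_apply)
    have h2c : 2*|c| ≤ |c - dG x₀| + |c + dG x₀| := by
      have ha := abs_add_le (c - dG x₀) (c + dG x₀)
      rw [show c - dG x₀ + (c + dG x₀) = 2*c by ring] at ha
      rw [abs_mul, abs_two] at ha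
      linarith
    linarith
  · have : 0 < |c| := abs_pos.2 hder
    linarith
end
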